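/- There exists a sequence (F_n)_{n ∈ ℕ} of sheaves of types on the real line ℝ such that for every n and every point x ∈ ℝ the stalk (F_n)_x is nonempty, while for every nonempty open set U ⊆ ℝ there exists n with F_n(U) empty. Consequently, the objectwise product presheaf ∏_n F_n (given by U ↦ ∏_n F_n(U)) has empty sections over every nonempty open set, hence empty stalk at every point. -/

import Mathlib

open TopologicalSpace

/-- A presheaf of types on a topological space `B`. -/
structure Psh (B : Type) [TopologicalSpace B] where
  obj : Opens B → Type
  res : ∀ {U V : Opens B}, V ≤ U → obj U → obj V
  res_id : ∀ (U : Opens B) (x : obj U), res le_rfl x = x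
  res_comp : ∀ {U V W : Opens B} (hWV : W ≤ V) (hVU : V ≤ U) (x : obj U),
    res hWV (res hVU x) = res (hWV.trans hVU) x

namespace Psh

variable {B : Type} [TopologicalSpace B]

/-- The sheaf conditions: separation and gluing for arbitrary open covers. -/
def IsSheaf (F : Psh B) : Prop :=
  ∀ {ι : Type} (U : Opens B) (V : ι → Opens B) (hV : ∀ i, V i ≤ U),
    (∀ x ∈ U, ∃ i, x ∈ V i) →
    (∀ s t : F.obj U, (∀ i, F.res (hV i) s = F.res (hV i) t) → s = t) ∧
    ∀ sf : ∀ i, F.obj (V i),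
      (∀ i j, F.res (inf_le_left : V i ⊓ V j ≤ V i) (sf i)
            = F.res (inf_le_right : V i ⊓ V j ≤ V j) (sf j)) →
      ∃ s : F.obj U, ∀ i, F.res (hV i) s = sf i

/-- The support of a presheaf: the union of all open sets with nonempty sections. -/
def supp (F : Psh B) : Set B := {b | ∃ U : Opens B, b ∈ U ∧ Nonempty (F.obj U)}

/-- The germ relation at a point. -/
def stalkRel (F : Psh B) (b : B) :
    (Σ U : {U : Opens B // b ∈ U}, F.obj U.1) →
      (Σ U : {U : Opens B // b ∈ U}, F.obj U.1) → Prop :=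
  fun x y => ∃ (W : Opens B) (_ : b ∈ W) (h1 : W ≤ x.1.1) (h2 : W ≤ y.1.1),
    F.res h1 x.2 = F.res h2 y.2

/-- The stalk of a presheaf at a point: the set of germs, i.e. the colimit of
sections over open neighborhoods of the point. -/
def stalk (F : Psh B) (b : B) : Type := Quot (F.stalkRel b)

/-- The germ of a section at a point. -/
def germ (F : Psh B) {b : B} {U : Opens B} (hb : b ∈ U) (s : F.obj U) : F.stalk b :=
  Quot.mk _ ⟨⟨U, hb⟩, s⟩

/-- A morphism of presheaves `F|_U → G|_U` (restricted to opens contained in `U`). -/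
structure Hom (F G : Psh B) (U : Opens B) where
  app : ∀ (V : Opens B), V ≤ U → F.obj V → G.obj V
  natural : ∀ {V W : Opens B} (hVU : V ≤ U) (hWV : W ≤ V) (s : F.obj V),
    G.res hWV (app V hVU s) = app W (hWV.trans hVU) (F.res hWV s)

/-- The Hom-presheaf `U ↦ {presheaf morphisms F|_U → G|_U}`. -/
def homPsh (F G : Psh B) : Psh B where
  obj U := Hom F G U
  res {U V} h φ :=
    { app := fun W hW => φ.app W (hW.trans h)
      natural := fun hVU hWV s => φ.natural _ hWV s }
  res_id := fun U φ => rfl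
  res_comp := fun _ _ _ => rfl

/-- Objectwise binary product of presheaves. -/
def prodObj (F G : Psh B) : Psh B where
  obj U := F.obj U × G.obj U
  res h x := (F.res h x.1, G.res h x.2)
  res_id U x := by (try dsimp only); rw [F.res_id, G.res_id]
  res_comp h1 h2 x := by dsimp only; rw [F.res_comp, G.res_comp]

/-- Objectwise binary coproduct of presheaves. -/
def sumObj (F G : Psh B) : Psh B where
  obj U := F.obj U ⊕ G.obj U
  res h x := x.elim (fun a => Sum.inl (F.res h a)) (fun c => Sum.inr (G.res h c))
  res_id U x := by
    cases x with
    | inl a => simp only [Sum.elim_inl]; rw [F.res_id]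
    | inr c => simp only [Sum.elim_inr]; rw [G.res_id]
  res_comp h1 h2 x := by
    cases x with
    | inl a => simp only [Sum.elim_inl]; rw [F.res_comp]
    | inr c => simp only [Sum.elim_inr]; rw [G.res_comp]

/-- Objectwise product of a family of presheaves. -/
def piObj {ι : Type} (F : ι → Psh B) : Psh B where
  obj U := ∀ i, (F i).obj U
  res h x i := (F i).res h (x i)
  res_id U x := by funext i; exact (F i).res_id U (x i)
  res_comp h1 h2 x := by funext i; exact (F i).res_comp h1 h2 (x i)

/-- Objectwise coproduct (disjoint union) of a family of presheaves. -/
def sigmaObj {ι : Type} (F : ι → Psh B) : Psh B where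
  obj U := Σ i, (F i).obj U
  res h x := ⟨x.1, (F x.1).res h x.2⟩
  res_id U x := by
    rcases x with ⟨i, s⟩
    exact congrArg (Sigma.mk i) ((F i).res_id U s)
  res_comp h1 h2 x := by
    rcases x with ⟨i, s⟩
    exact congrArg (Sigma.mk i) ((F i).res_comp h1 h2 s)

/-- The characteristic presheaf of an open set: a one-element type on opens
contained in `W`, the empty type elsewhere. -/
def char (W : Opens B) : Psh B where
  obj U := PLift (U ≤ W)
  res h x := ⟨h.trans x.down⟩
  res_id U x := rfl
  res_comp _ _ _ := rfl

/-- An isomorphism of presheaves. -/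
structure Iso (F G : Psh B) where
  hom : ∀ U, F.obj U ≃ G.obj U
  natural : ∀ {U V : Opens B} (h : V ≤ U) (s : F.obj U),
    G.res h (hom U s) = hom V (F.res h s)

end Psh


section MyAux
open Metric

/-- Value `k` is allowed at `x` for the `n`-th sheaf iff `(n+1)*x` avoids the
shifted grid `ℤ + 1/(k+2)`. -/
def myP (n k : ℕ) (x : ℝ) : Prop := ∀ j : ℤ, ((n : ℝ) + 1) * x ≠ (j : ℝ) + 1 / ((k : ℝ) + 2)

lemma isOpen_myP (n k : ℕ) : IsOpen {y : ℝ | myP n k y} := by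
  have : {y : ℝ | myP n k y} =
      (fun y : ℝ => ((n : ℝ) + 1) * y - 1 / ((k : ℝ) + 2)) ⁻¹' (Set.range ((↑) : ℤ → ℝ))ᶜ := by
    ext y
    simp only [Set.mem_setOf_eq, Set.mem_preimage, Set.mem_compl_iff, Set.mem_range, myP,
      not_exists]
    constructor
    · intro h j hj; exact h j (by linarith)
    · intro h j hj; exact h j (by linarith)
  rw [this]
  exact (Int.isClosedEmbedding_coe_real.isClosed_range.isOpen_compl).preimage (by continuity)

lemma myP_choice (n : ℕ) (x : ℝ) : ∃ k, myP n k x := by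
  by_contra h
  push_neg at h
  simp only [myP, not_forall, not_ne_iff] at h
  obtain ⟨j0, hj0⟩ := h 0
  obtain ⟨j1, hj1⟩ := h 1
  rw [hj0] at hj1
  have hd : ((j1 - j0 : ℤ) : ℝ) = 1/2 - 1/3 := by push_cast; norm_num at hj1 ⊢; linarith
  have h16 : ((j1 - j0 : ℤ) : ℝ) = 1/6 := by rw [hd]; norm_num
  have hpos : (0 : ℝ) < ((j1 - j0 : ℤ) : ℝ) := by rw [h16]; norm_num
  have hlt : ((j1 - j0 : ℤ) : ℝ) < 1 := by rw [h16]; norm_num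
  have h1 : (0 : ℤ) < j1 - j0 := by exact_mod_cast hpos
  have h2 : j1 - j0 < 1 := by exact_mod_cast hlt
  omega

/-- The `n`-th sheaf: locally constant `ℕ`-valued functions whose value is
everywhere allowed by `myP n`. -/
def myF (n : ℕ) : Psh ℝ where
  obj U := { f : ↥(U : Set ℝ) → ℕ // IsLocallyConstant f ∧ ∀ x : ↥(U : Set ℝ), myP n (f x) ↑x }
  res {U V} h f := ⟨f.1 ∘ Set.inclusion h,
    f.2.1.comp_continuous (continuous_inclusion h), fun x => f.2.2 _⟩
  res_id U f := rfl
  res_comp hWV hVU f := rfl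

lemma myF_isSheaf (n : ℕ) : (myF n).IsSheaf := by
  intro ι U V hV hcov
  constructor
  · intro s t h
    apply Subtype.ext
    funext x
    obtain ⟨i, hi⟩ := hcov ↑x x.2
    exact congrFun (congrArg Subtype.val (h i)) ⟨↑x, hi⟩
  · intro sf hcomp
    have key : ∀ (x : ℝ) (i j : ι) (hi : x ∈ V i) (hj : x ∈ V j),
        (sf i).1 ⟨x, hi⟩ = (sf j).1 ⟨x, hj⟩ := by
      intro x i j hi hj
      exact congrFun (congrArg Subtype.val (hcomp i j)) ⟨x, hi, hj⟩
    choose idx hidx using fun x : ↥(U : Set ℝ) => hcov ↑x x.2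
    refine ⟨⟨fun x => (sf (idx x)).1 ⟨↑x, hidx x⟩, ?_, ?_⟩, ?_⟩
    · rw [IsLocallyConstant.iff_exists_open]
      intro x
      obtain ⟨t, hto, hxt, hconst⟩ :=
        (IsLocallyConstant.iff_exists_open _).1 (sf (idx x)).2.1 ⟨↑x, hidx x⟩
      obtain ⟨W, hWo, hWt⟩ := (isOpen_induced_iff).1 hto
      refine ⟨(Subtype.val ⁻¹' (W ∩ (V (idx x) : Set ℝ))), ?_, ?_, ?_⟩
      · exact (hWo.inter (V (idx x)).2).preimage continuous_subtype_val
      · constructor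
        · have : (⟨↑x, hidx x⟩ : ↥(V (idx x) : Opens ℝ)) ∈ t := hxt
          rw [← hWt] at this; exact this
        · exact hidx x
      · intro y hy
        have hyV : ↑y ∈ V (idx x) := hy.2
        have h1 : (sf (idx y)).1 ⟨↑y, hidx y⟩ = (sf (idx x)).1 ⟨↑y, hyV⟩ :=
          key ↑y _ _ _ _
        rw [h1]
        have : (⟨↑y, hyV⟩ : ↥(V (idx x) : Opens ℝ)) ∈ t := by
          rw [← hWt]; exact hy.1
        exact hconst _ this
    · intro x
      exact (sf (idx x)).2.2 ⟨↑x, hidx x⟩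
    · intro i
      apply Subtype.ext
      funext y
      exact key ↑y _ i _ y.2

lemma myF_empty (U : Opens ℝ) (hU : (U : Set ℝ).Nonempty) :
    ∃ n, IsEmpty ((myF n).obj U) := by
  obtain ⟨x, hx⟩ := hU
  obtain ⟨ε, hε, hball⟩ := Metric.isOpen_iff.1 U.2 x hx
  obtain ⟨n, hn⟩ := exists_nat_gt (1 / (2 * ε))
  have h2ε : (0:ℝ) < 2 * ε := by linarith
  have hgrid : 1 < ((n:ℝ) + 1) * (2 * ε) := by
    have := (div_lt_iff₀ h2ε).1 hn
    nlinarith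
  refine ⟨n, ⟨fun F => ?_⟩⟩
  obtain ⟨f, hf, hfP⟩ := F
  haveI : PreconnectedSpace ↥(ball x ε) :=
    Subtype.preconnectedSpace (convex_ball x ε).isPreconnected
  have hxball : x ∈ ball x ε := mem_ball_self hε
  set g : ↥(ball x ε) → ℕ := fun y => f ⟨↑y, hball y.2⟩ with hg
  have hgl : IsLocallyConstant g := hf.comp_continuous (by
    exact Continuous.subtype_mk (continuous_subtype_val) _)
  set k : ℕ := g ⟨x, hxball⟩ with hk
  set c : ℝ := 1 / ((k:ℝ) + 2) with hc
  have hc0 : 0 < c := by positivity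
  have hc1 : c < 1 := by
    rw [hc, div_lt_one (by positivity)]
    have : (0:ℝ) ≤ (k:ℝ) := Nat.cast_nonneg k
    linarith
  set a : ℝ := ((n:ℝ) + 1) * (x - ε) with ha
  set j : ℤ := ⌊a - c⌋ + 1 with hj
  have hj1 : a < (j:ℝ) + c := by
    have := Int.lt_floor_add_one (a - c)
    push_cast [hj]
    linarith
  have hj2 : (j:ℝ) + c ≤ a + 1 := by
    have := Int.floor_le (a - c)
    push_cast [hj]
    linarith
  have hnpos : (0:ℝ) < (n:ℝ) + 1 := by positivity
  set y : ℝ := ((j:ℝ) + c) / ((n:ℝ) + 1) with hy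
  have hylt : y < x + ε := by
    rw [hy, div_lt_iff₀ hnpos]
    nlinarith
  have hygt : x - ε < y := by
    rw [hy, lt_div_iff₀ hnpos]
    nlinarith
  have hyball : y ∈ ball x ε := by
    rw [mem_ball, Real.dist_eq, abs_sub_lt_iff]
    constructor <;> linarith
  have hP := hfP ⟨y, hball hyball⟩
  have hval : g ⟨y, hyball⟩ = k := hgl.apply_eq_of_preconnectedSpace _ _
  have heq : f ⟨y, hball hyball⟩ = k := hval
  rw [heq] at hP
  exact hP j (by
    rw [show ((⟨y, hball hyball⟩ : ↥(U : Set ℝ)) : ℝ) = y from rfl, hy, hc]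
    field_simp)

lemma myF_stalk_nonempty (n : ℕ) (x : ℝ) : Nonempty ((myF n).stalk x) := by
  obtain ⟨k, hk⟩ := myP_choice n x
  refine ⟨(myF n).germ (U := ⟨{y : ℝ | myP n k y}, isOpen_myP n k⟩) hk
    ⟨fun _ => k, IsLocallyConstant.const k, fun y => y.2⟩⟩

end MyAux

/-- There is a sequence of sheaves on ℝ with all stalks nonempty whose objectwise
product presheaf has empty sections over every nonempty open set and empty stalks. -/
theorem stmt_8 :
    ∃ F : ℕ → Psh ℝ,
      (∀ n, (F n).IsSheaf) ∧
      (∀ (n : ℕ) (x : ℝ), Nonempty ((F n).stalk x)) ∧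
      (∀ U : Opens ℝ, (U : Set ℝ).Nonempty → ∃ n, IsEmpty ((F n).obj U)) ∧
      (∀ U : Opens ℝ, (U : Set ℝ).Nonempty → IsEmpty ((Psh.piObj F).obj U)) ∧
      (∀ x : ℝ, IsEmpty ((Psh.piObj F).stalk x)) := by
  refine ⟨myF, myF_isSheaf, myF_stalk_nonempty, myF_empty, ?_, ?_⟩
  · intro U hU
    obtain ⟨n, hn⟩ := myF_empty U hU
    exact ⟨fun g => hn.false (g n)⟩
  · intro x
    constructor
    intro q
    induction q using Quot.ind with
    | _ a =>
      obtain ⟨⟨U, hxU⟩, s⟩ := a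
      obtain ⟨n, hn⟩ := myF_empty U ⟨x, hxU⟩
      exact hn.false (s n)
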